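/- Let H ∈ M_N({±1}) be a Hadamard matrix with N ≥ 4 whose top-left 2×2 block is [[1,1],[1,−1]] and whose first two rows and columns are arranged so that B and C = Bᵗ consist of the column/row patterns (1,1) and (1,−1) in blocks of sizes N/2−1 each. Then for the complementary (N−2)×(N−2) block D, the matrix T = √(DᵗD) equals √N·I − S where S is block diagonal with two blocks of size N/2−1, each equal to (2/(√2+√N)) times the all-ones matrix; consequently the characteristic polynomial of T is (λ−√2)²(λ−√N)^{N−4} and |det D| = 2·N^{N/2−2}. -/

import Mathlib

set_option synthInstance.maxHeartbeats 1000000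
set_option maxHeartbeats 1600000

open Matrix Polynomial
section
open scoped ComplexOrder
noncomputable def Matrix.PosSemidef.sqrt {n 𝕜 : Type*} [Fintype n] [DecidableEq n] [RCLike 𝕜]
    {A : Matrix n n 𝕜} (hA : A.PosSemidef) : Matrix n n 𝕜 :=
  hA.1.eigenvectorUnitary.1 * diagonal ((↑) ∘ (fun x : ℝ => Real.sqrt x) ∘ hA.1.eigenvalues) *
    (star hA.1.eigenvectorUnitary : Matrix n n 𝕜)
end

open scoped MatrixOrder in
lemma psd_eq_sqrt_of_sq_eq {n : Type*} [Fintype n] [DecidableEq n] {A : Matrix n n ℝ}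
    (hA : A.PosSemidef) (B : Matrix n n ℝ) (hB : B.PosSemidef) (hAB : B ^ 2 = A) :
    B = hA.sqrt := by
  have h : hA.sqrt = CFC.sqrt A := by
    rw [CFC.sqrt_eq_cfc, cfc_nnreal_eq_real _ A, hA.1.cfc_eq]
    simp only [IsHermitian.cfc, Matrix.PosSemidef.sqrt, Unitary.conjStarAlgAut_apply, Real.coe_sqrt,
      Real.coe_toNNReal']
    congr 3
    funext i
    simp [max_eq_left (hA.eigenvalues_nonneg i)]
  rw [h, ← hAB, CFC.sqrt_sq B hB.nonneg]

lemma det_aux {F : Type*} [Field F] (n : ℕ) (hn : 1 ≤ n) (a b : F) (ha : a ≠ 0) :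
    (a • (1 : Matrix (Fin n) (Fin n) F) + b • Matrix.of fun _ _ => (1 : F)).det
      = (a + n * b) * a ^ (n - 1) := by
  have h1 : a • (1 : Matrix (Fin n) (Fin n) F) + b • Matrix.of (fun _ _ => (1 : F))
      = a • ((1 : Matrix (Fin n) (Fin n) F)
          + Matrix.replicateCol Unit (fun _ : Fin n => b / a) * Matrix.replicateRow Unit (fun _ : Fin n => (1 : F))) := by
    ext i j
    by_cases h : i = j <;>
      simp [Matrix.mul_apply, Matrix.one_apply, h, mul_add, mul_div_cancel₀ _ ha]
  rw [h1, Matrix.det_smul, Matrix.det_one_add_replicateCol_mul_replicateRow]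
  have h2 : (fun _ : Fin n => (1:F)) ⬝ᵥ (fun _ : Fin n => b / a) = n * (b / a) := by
    simp [dotProduct]
  rw [h2, Fintype.card_fin]
  have hpow : a ^ n = a ^ (n - 1) * a := by
    rw [← pow_succ]; congr 1; omega
  rw [hpow]
  field_simp

lemma det_aux_poly (n : ℕ) (hn : 1 ≤ n) (r s : ℝ) :
    (((X : ℝ[X]) - Polynomial.C r) • (1 : Matrix (Fin n) (Fin n) ℝ[X])
        + (Polynomial.C s) • Matrix.of fun _ _ => (1 : ℝ[X])).det
      = ((X : ℝ[X]) - Polynomial.C r + (n : ℝ[X]) * Polynomial.C s)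
          * ((X : ℝ[X]) - Polynomial.C r) ^ (n - 1) := by
  set f := algebraMap ℝ[X] (RatFunc ℝ) with hf
  have hinj : Function.Injective f := RatFunc.algebraMap_injective ℝ
  apply hinj
  rw [RingHom.map_det, RingHom.mapMatrix_apply]
  have hmap : (((X : ℝ[X]) - Polynomial.C r) • (1 : Matrix (Fin n) (Fin n) ℝ[X])
        + (Polynomial.C s) • Matrix.of fun _ _ => (1 : ℝ[X])).map f
      = f ((X : ℝ[X]) - Polynomial.C r) • (1 : Matrix (Fin n) (Fin n) (RatFunc ℝ))
        + f (Polynomial.C s) • Matrix.of fun _ _ => (1 : RatFunc ℝ) := by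
    ext i j
    by_cases h : i = j <;> simp [Matrix.one_apply, h]
  have ha : f ((X : ℝ[X]) - Polynomial.C r) ≠ 0 := by
    intro h
    exact (Polynomial.X_sub_C_ne_zero r) (hinj (by simpa using h))
  rw [hmap, det_aux n hn _ _ ha]
  simp only [map_sub, map_add, _root_.map_mul, map_pow, map_natCast]

lemma fromBlocks_sub' {α l m n o : Type*} [Sub α]
    (A A' : Matrix n l α) (B B' : Matrix n m α) (C C' : Matrix o l α) (D D' : Matrix o m α) :
    Matrix.fromBlocks A B C D - Matrix.fromBlocks A' B' C' D'
      = Matrix.fromBlocks (A - A') (B - B') (C - C') (D - D') := by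
  ext i j
  rcases i with i | i <;> rcases j with j | j <;> simp

/-- Let `H ∈ M_N(±1)` (with `N = 2n+2 ≥ 4`) be a Hadamard matrix with
top-left `2×2` block `A = [[1,1],[1,−1]]`, whose first two rows/columns are
arranged so that `B` (and `C = Bᵗ`) consist of the column patterns `(1,1)` and
`(1,−1)` in blocks of size `N/2 − 1 = n` each. Then for the complementary
block `D`, `T = √(DᵗD) = √N·I − S` where `S` is block diagonal with two
blocks `(2/(√2+√N))·J_n`; consequently
`charpoly T = (λ−√2)²(λ−√N)^{N−4}` and `|det D| = 2·N^{N/2−2}`. -/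
theorem stmt_17 (n : ℕ) (hn : 1 ≤ n)
    (B : Matrix (Fin 2) (Fin n ⊕ Fin n) ℝ)
    (C : Matrix (Fin n ⊕ Fin n) (Fin 2) ℝ)
    (D : Matrix (Fin n ⊕ Fin n) (Fin n ⊕ Fin n) ℝ)
    (hB0 : ∀ j, B 0 j = 1)
    (hB1l : ∀ j, B 1 (Sum.inl j) = 1) (hB1r : ∀ j, B 1 (Sum.inr j) = -1)
    (hC : C = Bᵀ)
    (hD : ∀ i j, D i j = 1 ∨ D i j = -1)
    (hH : Matrix.fromBlocks !![1, 1; 1, -1] B C D *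
        (Matrix.fromBlocks !![1, 1; 1, -1] B C D)ᵀ = ((2 * n + 2 : ℕ) : ℝ) • 1) :
    letI c : ℝ := 2 / (Real.sqrt 2 + Real.sqrt (2 * n + 2))
    letI J : Matrix (Fin n) (Fin n) ℝ := Matrix.of fun _ _ => (1 : ℝ)
    letI S := Matrix.fromBlocks (c • J) 0 0 (c • J)
    Matrix.PosSemidef.sqrt (Matrix.posSemidef_conjTranspose_mul_self D) =
        Real.sqrt (2 * n + 2) • (1 : Matrix (Fin n ⊕ Fin n) (Fin n ⊕ Fin n) ℝ) - S ∧
      (Real.sqrt (2 * n + 2) • (1 : Matrix (Fin n ⊕ Fin n) (Fin n ⊕ Fin n) ℝ) - S).charpoly =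
        ((X : ℝ[X]) - Polynomial.C (Real.sqrt 2)) ^ 2 *
          ((X : ℝ[X]) - Polynomial.C (Real.sqrt (2 * n + 2))) ^ (2 * n - 2) ∧
      |D.det| = 2 * ((2 * n + 2 : ℕ) : ℝ) ^ (n - 1) := by
  set c : ℝ := 2 / (Real.sqrt 2 + Real.sqrt (2 * (n:ℝ) + 2)) with hc
  set J : Matrix (Fin n) (Fin n) ℝ := Matrix.of fun _ _ => (1 : ℝ) with hJ
  set S : Matrix (Fin n ⊕ Fin n) (Fin n ⊕ Fin n) ℝ := Matrix.fromBlocks (c • J) 0 0 (c • J) with hS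
  set s2 : ℝ := Real.sqrt 2 with hs2def
  set sN : ℝ := Real.sqrt (2 * (n:ℝ) + 2) with hsNdef
  have hNpos : (0:ℝ) < 2 * (n:ℝ) + 2 := by positivity
  have hNr : ((2 * n + 2 : ℕ) : ℝ) = 2 * (n:ℝ) + 2 := by push_cast; ring
  have hs2sq : s2 ^ 2 = 2 := by rw [hs2def]; exact Real.sq_sqrt (by norm_num)
  have hsNsq : sN ^ 2 = 2 * (n:ℝ) + 2 := by rw [hsNdef]; exact Real.sq_sqrt hNpos.le
  have hs2pos : 0 < s2 := by rw [hs2def]; exact Real.sqrt_pos.mpr (by norm_num)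
  have hsNpos : 0 < sN := by rw [hsNdef]; exact Real.sqrt_pos.mpr hNpos
  clear_value s2 sN
  clear_value c J S
  have hden : s2 + sN ≠ 0 := by positivity
  have hcpos : 0 < c := by
    rw [hc]; exact div_pos two_pos (add_pos hs2pos hsNpos)
  have key1 : (n:ℝ) * c = sN - s2 := by
    rw [hc]
    rw [mul_div_assoc', div_eq_iff hden]
    nlinarith [hs2sq, hsNsq]
  -- the small blocks
  set K : Matrix (Fin n) (Fin n) ℝ := sN • 1 - c • J with hK
  set M : Matrix (Fin n ⊕ Fin n) (Fin n ⊕ Fin n) ℝ := sN • 1 - S with hM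
  clear_value K M
  have hJJ : J * J = (n:ℝ) • J := by
    ext i j
    simp [hJ, Matrix.mul_apply]
  have hMblocks : M = Matrix.fromBlocks K 0 0 K := by
    rw [hM, hS, hK]
    ext i j
    rcases i with i | i <;> rcases j with j | j <;>
      simp [Matrix.one_apply, Sum.inl.injEq, Sum.inr.injEq]
  have hKK : K * K = ((2 * (n:ℝ) + 2)) • (1 : Matrix (Fin n) (Fin n) ℝ) - (2:ℝ) • J := by
    have hc2 : c * (s2 + sN) = 2 := by rw [hc]; field_simp
    rw [hK]
    simp only [Matrix.sub_mul, Matrix.mul_sub, Matrix.smul_mul, Matrix.mul_smul,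
      Matrix.one_mul, Matrix.mul_one, hJJ, smul_smul]
    match_scalars
    · linear_combination hsNsq
    · linear_combination c * key1 - hc2
  -- Hadamard relations
  set H := Matrix.fromBlocks !![(1:ℝ), 1; 1, -1] B C D with hHdef
  clear_value H
  have hN0 : ((2 * n + 2 : ℕ) : ℝ) ≠ 0 := by rw [hNr]; positivity
  have hHtH : Hᵀ * H = ((2 * n + 2 : ℕ) : ℝ) • 1 := by
    have h1 : H * (((2 * n + 2 : ℕ) : ℝ)⁻¹ • Hᵀ) = 1 := by
      rw [Matrix.mul_smul, hH, smul_smul, inv_mul_cancel₀ hN0, one_smul]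
    have h2 := mul_eq_one_comm.mp h1
    calc Hᵀ * H = ((2 * n + 2 : ℕ) : ℝ) • ((((2 * n + 2 : ℕ) : ℝ)⁻¹ • Hᵀ) * H) := by
          rw [Matrix.smul_mul, smul_smul, mul_inv_cancel₀ hN0, one_smul]
      _ = _ := by rw [h2]
  have hblocks : Bᵀ * B + Dᵀ * D = ((2 * n + 2 : ℕ) : ℝ) • 1 := by
    have h := hHtH
    rw [hHdef, Matrix.fromBlocks_transpose, Matrix.fromBlocks_multiply] at h
    have hone : ((2 * n + 2 : ℕ) : ℝ) • (1 : Matrix (Fin 2 ⊕ (Fin n ⊕ Fin n)) (Fin 2 ⊕ (Fin n ⊕ Fin n)) ℝ)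
        = Matrix.fromBlocks (((2 * n + 2 : ℕ) : ℝ) • 1) 0 0 (((2 * n + 2 : ℕ) : ℝ) • 1) := by
      rw [← Matrix.fromBlocks_one, Matrix.fromBlocks_smul]
      simp only [smul_zero]
    rw [hone] at h
    have h22 := congrArg Matrix.toBlocks₂₂ h
    rwa [Matrix.toBlocks_fromBlocks₂₂, Matrix.toBlocks_fromBlocks₂₂] at h22
  have hBtB : Bᵀ * B = Matrix.fromBlocks ((2:ℝ) • J) 0 0 ((2:ℝ) • J) := by
    ext i j
    rcases i with i | i <;> rcases j with j | j <;>
      simp [Matrix.mul_apply, Fin.sum_univ_two, hB0, hB1l, hB1r, hJ] <;> norm_num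
  have hsub : Dᵀ * D = ((2 * n + 2 : ℕ) : ℝ) • 1 - Bᵀ * B := (eq_sub_of_add_eq' hblocks)
  have hMM : M * M = Dᵀ * D := by
    rw [hMblocks, Matrix.fromBlocks_multiply, hsub, hBtB]
    simp only [Matrix.mul_zero, Matrix.zero_mul, add_zero, zero_add, Matrix.zero_mul]
    rw [hKK]
    ext i j
    rcases i with i | i <;> rcases j with j | j <;>
      simp [Matrix.one_apply, hNr, Sum.inl.injEq, Sum.inr.injEq]
  -- positive semidefiniteness of M
  set W : Matrix (Fin n ⊕ Fin n) (Fin n ⊕ Fin n) ℝ :=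
    (n:ℝ) • 1 - Matrix.fromBlocks J 0 0 J with hW
  clear_value W
  have hJ2 : (Matrix.fromBlocks J 0 0 J) * (Matrix.fromBlocks J 0 0 J)
      = (n:ℝ) • Matrix.fromBlocks J 0 0 J := by
    rw [Matrix.fromBlocks_multiply, Matrix.fromBlocks_smul]
    simp only [Matrix.mul_zero, Matrix.zero_mul, add_zero, zero_add, smul_zero, hJJ]
  have hWW : W * W = (n:ℝ) • W := by
    rw [hW]
    simp only [Matrix.sub_mul, Matrix.mul_sub, Matrix.smul_mul, Matrix.mul_smul,
      Matrix.one_mul, Matrix.mul_one, hJ2, smul_smul, smul_sub]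
    match_scalars <;> ring
  have hWsymm : Wᴴ = W := by
    rw [Matrix.conjTranspose_eq_transpose_of_trivial, hW, Matrix.transpose_sub,
      Matrix.transpose_smul, Matrix.transpose_one, Matrix.fromBlocks_transpose, hJ]
    ext i j
    rcases i with i | i <;> rcases j with j | j <;> simp
  have hnR : (0:ℝ) < (n:ℝ) := by exact_mod_cast hn
  have hWpsd : W.PosSemidef := by
    have hQ : W = ((Real.sqrt (n:ℝ))⁻¹ • W)ᴴ * ((Real.sqrt (n:ℝ))⁻¹ • W) := by
      rw [Matrix.conjTranspose_smul, hWsymm, Matrix.smul_mul, Matrix.mul_smul, hWW,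
        smul_smul, smul_smul]
      have h0 : star (Real.sqrt (n:ℝ))⁻¹ * (Real.sqrt (n:ℝ))⁻¹ * (n:ℝ) = 1 := by
        rw [star_trivial, ← mul_inv, Real.mul_self_sqrt hnR.le]
        exact inv_mul_cancel₀ hnR.ne'
      rw [h0, one_smul]
    rw [hQ]
    exact Matrix.posSemidef_conjTranspose_mul_self _
  have hcWpsd : (c • W).PosSemidef := by
    have hQ : c • W = ((Real.sqrt (c / n)) • W)ᴴ * ((Real.sqrt (c / n)) • W) := by
      rw [Matrix.conjTranspose_smul, hWsymm, Matrix.smul_mul, Matrix.mul_smul, hWW,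
        smul_smul, smul_smul, star_trivial]
      congr 1
      rw [Real.mul_self_sqrt (div_nonneg hcpos.le hnR.le), div_mul_cancel₀ _ hnR.ne']
    rw [hQ]
    exact Matrix.posSemidef_conjTranspose_mul_self _
  have hSW : S = c • Matrix.fromBlocks J 0 0 J := by
    rw [Matrix.fromBlocks_smul]
    simp only [smul_zero, hS]
  have hMdecomp : M = s2 • 1 + c • W := by
    rw [hM, hW, hSW, smul_sub, smul_smul]
    match_scalars
    · linarith [key1]
    · ring
  have hs2psd : (s2 • (1 : Matrix (Fin n ⊕ Fin n) (Fin n ⊕ Fin n) ℝ)).PosSemidef := by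
    rw [Matrix.smul_one_eq_diagonal]
    exact Matrix.PosSemidef.diagonal (fun _ => hs2pos.le)
  have hMpsd : M.PosSemidef := by
    rw [hMdecomp]
    exact hs2psd.add hcWpsd
  -- part 1: the square root
  have hDconj : Dᴴ = Dᵀ := Matrix.conjTranspose_eq_transpose_of_trivial D
  have hsqrt : Matrix.PosSemidef.sqrt (Matrix.posSemidef_conjTranspose_mul_self D) = M := by
    refine (psd_eq_sqrt_of_sq_eq _ M hMpsd ?_).symm
    rw [pow_two, hMM, hDconj]
  -- part 2: charpoly
  have hchar : M.charpoly
      = ((X:ℝ[X]) - Polynomial.C s2) ^ 2 * ((X:ℝ[X]) - Polynomial.C sN) ^ (2 * n - 2) := by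
    have hKp : (X:ℝ[X]) • (1 : Matrix (Fin n) (Fin n) ℝ[X]) - K.map Polynomial.C
        = ((X:ℝ[X]) - Polynomial.C sN) • 1
            + (Polynomial.C c) • Matrix.of fun _ _ => (1:ℝ[X]) := by
      ext i j
      by_cases h : i = j <;>
        simp [hK, hJ, Matrix.one_apply, h, map_sub, map_neg] <;> ring
    have hcm0 : M.charmatrix
        = (X:ℝ[X]) • (1 : Matrix (Fin n ⊕ Fin n) (Fin n ⊕ Fin n) ℝ[X]) - M.map Polynomial.C := by
      ext i j
      by_cases h : i = j <;>
        simp [Matrix.charmatrix_apply, Matrix.diagonal_apply, Matrix.one_apply, h]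
    have hcm : M.charmatrix = Matrix.fromBlocks
        (((X:ℝ[X]) - Polynomial.C sN) • 1 + (Polynomial.C c) • Matrix.of fun _ _ => (1:ℝ[X])) 0 0
        (((X:ℝ[X]) - Polynomial.C sN) • 1 + (Polynomial.C c) • Matrix.of fun _ _ => (1:ℝ[X])) := by
      rw [hcm0, hMblocks, Matrix.fromBlocks_map, ← Matrix.fromBlocks_one, Matrix.fromBlocks_smul,
        fromBlocks_sub', hKp]
      congr 1 <;> simp [Matrix.map_zero _ (Polynomial.C_0)]
    rw [Matrix.charpoly, hcm, Matrix.det_fromBlocks_zero₂₁, det_aux_poly n hn sN c]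
    have hXs : (X:ℝ[X]) - Polynomial.C sN + (n : ℝ[X]) * Polynomial.C c
        = (X:ℝ[X]) - Polynomial.C s2 := by
      have h4 : s2 = sN - (n:ℝ) * c := by linarith [key1]
      rw [h4, map_sub, _root_.map_mul, map_natCast]
      ring
    rw [hXs, show 2 * n - 2 = (n - 1) + (n - 1) by omega, pow_add]
    ring
  -- part 3: determinant
  have hss : sN * sN = 2 * (n:ℝ) + 2 := by rw [← pow_two]; exact hsNsq
  have h22 : s2 * s2 = 2 := by rw [← pow_two]; exact hs2sq
  have hdetK : K.det = s2 * sN ^ (n - 1) := by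
    have h1 : K = sN • (1 : Matrix (Fin n) (Fin n) ℝ) + (-c) • Matrix.of fun _ _ => (1:ℝ) := by
      rw [hK, hJ, sub_eq_add_neg, neg_smul]
    rw [h1, det_aux n hn sN (-c) hsNpos.ne']
    have h2 : sN + (n:ℝ) * (-c) = s2 := by linarith [key1]
    rw [h2]
  have hdetM : M.det = 2 * ((2 * n + 2 : ℕ) : ℝ) ^ (n - 1) := by
    rw [hMblocks, Matrix.det_fromBlocks_zero₂₁, hdetK, hNr]
    calc s2 * sN ^ (n-1) * (s2 * sN ^ (n-1)) = (s2 * s2) * (sN * sN) ^ (n-1) := by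
          rw [mul_pow]; ring
      _ = 2 * (2 * (n:ℝ) + 2) ^ (n-1) := by rw [hss, h22]
  have hdetD : |D.det| = 2 * ((2 * n + 2 : ℕ) : ℝ) ^ (n - 1) := by
    have h1 : D.det ^ 2 = (2 * ((2 * n + 2 : ℕ) : ℝ) ^ (n - 1)) ^ 2 := by
      have h2 : D.det ^ 2 = (Dᵀ * D).det := by
        rw [Matrix.det_mul, Matrix.det_transpose, pow_two]
      rw [h2, ← hMM, Matrix.det_mul, hdetM]; ring
    have h3 : (0:ℝ) ≤ 2 * ((2 * n + 2 : ℕ) : ℝ) ^ (n - 1) := by positivity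
    calc |D.det| = Real.sqrt (D.det ^ 2) := (Real.sqrt_sq_eq_abs _).symm
      _ = Real.sqrt ((2 * ((2 * n + 2 : ℕ) : ℝ) ^ (n - 1)) ^ 2) := by rw [h1]
      _ = _ := Real.sqrt_sq h3
  exact ⟨hsqrt, hchar, hdetD⟩
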